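/- Continuant recursion for symplectic frieze determinants: defining D_{i,j} as the determinant of the pentadiagonal matrix with rows ( …, 1, a_m, b_{m+1}, a_{m+1}, 1, …) as in the paper (D_{i,i} = a_i, D_{i,i−1} := 1, D_{i,i−2} := 0, D_{i,i−3} := 0), one has D_{i,j} = a_j D_{i,j−1} − b_j D_{i,j−2} + a_{j−1} D_{i,j−3} − D_{i,j−4} for all j ≥ i. -/

import Mathlib

/-- The pentadiagonal (continuant-type) matrix of size `k+1` whose row `r` has
diagonal entry `a (i+r)`, superdiagonals `b (i+r+1)`, `a (i+r+1)`, `1`, and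
subdiagonal `1`. -/
def pentaMat {K : Type*} [CommRing K] (a b : ℤ → K) (i : ℤ) (k : ℕ) :
    Matrix (Fin (k + 1)) (Fin (k + 1)) K :=
  Matrix.of fun r s =>
    if (s : ℕ) = (r : ℕ) then a (i + (r : ℕ))
    else if (s : ℕ) = (r : ℕ) + 1 then b (i + (r : ℕ) + 1)
    else if (s : ℕ) = (r : ℕ) + 2 then a (i + (r : ℕ) + 1)
    else if (s : ℕ) = (r : ℕ) + 3 then 1
    else if (r : ℕ) = (s : ℕ) + 1 then 1
    else 0

section aux
set_option linter.unreachableTactic false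
set_option linter.unnecessarySeqFocus false
set_option linter.unusedTactic false
variable {K : Type*} [CommRing K]

def pE (a b : ℤ → K) (i : ℤ) (r s : ℕ) : K :=
  if s = r then a (i + r)
  else if s = r + 1 then b (i + r + 1)
  else if s = r + 2 then a (i + r + 1)
  else if s = r + 3 then 1
  else if r = s + 1 then 1
  else 0

lemma pentaMat_apply (a b : ℤ → K) (i : ℤ) (k : ℕ)
    (r s : Fin (k+1)) : pentaMat a b i k r s = pE a b i (r : ℕ) (s : ℕ) := rfl

/-- rows `0..t-1` of the big pentadiagonal matrix, columns `0..t-2` and column `k`. -/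
def colMat (a b : ℤ → K) (i : ℤ) (k t : ℕ) : Matrix (Fin t) (Fin t) K :=
  Matrix.of fun r s => if (s : ℕ) = t - 1 then pE a b i (r : ℕ) k else pE a b i (r : ℕ) (s : ℕ)

lemma succAbove_coe (n : ℕ) (t : Fin (n+2)) (q : Fin (n+1)) :
    ((t.succAbove q : Fin (n+2)) : ℕ) = if ((q:ℕ)) < (t:ℕ) then (q:ℕ) else (q:ℕ)+1 := by
  simp [Fin.succAbove, Fin.lt_def, apply_ite (Fin.val)]

lemma det_expand_last_two {n : ℕ}
    (M : Matrix (Fin (n+2)) (Fin (n+2)) K)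
    (h : ∀ j : Fin (n+2), (j:ℕ) < n → M (Fin.last (n+1)) j = 0) :
    M.det = M (Fin.last (n+1)) (Fin.last (n+1)) *
        (M.submatrix Fin.castSucc Fin.castSucc).det
      - M (Fin.last (n+1)) ⟨n, by omega⟩ *
        (M.submatrix Fin.castSucc ((⟨n, by omega⟩ : Fin (n+2)).succAbove)).det := by
  rw [Matrix.det_succ_row M (Fin.last (n+1))]
  have hzero : ∀ j ∈ Finset.univ,
      j ∉ ({(⟨n, by omega⟩ : Fin (n+2)), Fin.last (n+1)} : Finset (Fin (n+2))) →
      (-1 : K) ^ (((Fin.last (n+1)) : ℕ) + (j:ℕ)) * M (Fin.last (n+1)) j *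
        (M.submatrix (Fin.last (n+1)).succAbove j.succAbove).det = 0 := by
    intro j _ hj
    have hj' : (j:ℕ) < n := by
      simp only [Finset.mem_insert, Finset.mem_singleton, Fin.ext_iff, Fin.val_last] at hj
      omega
    rw [h j hj']; ring
  rw [← Finset.sum_subset (Finset.subset_univ _) hzero]
  rw [Finset.sum_pair (by simp [Fin.ext_iff])]
  simp only [Fin.val_last, Fin.succAbove_last]
  have h1 : (-1 : K) ^ ((n+1) + n) = -1 := Odd.neg_one_pow ⟨n, by ring⟩
  have h2 : (-1 : K) ^ ((n+1) + (n+1)) = 1 := Even.neg_one_pow ⟨n+1, by ring⟩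
  rw [h1, h2]
  ring

lemma step1 (a b : ℤ → K) (i : ℤ) (m : ℕ) :
    (pentaMat a b i (m+4)).det =
      a (i + ((m+4 : ℕ) : ℤ)) * (pentaMat a b i (m+3)).det - (colMat a b i (m+4) (m+4)).det := by
  have h := det_expand_last_two (n := m+3) (pentaMat a b i (m+4)) (by
    intro j hj
    rw [pentaMat_apply]
    simp only [pE, Fin.val_last]
    split_ifs <;> first | rfl | omega)
  rw [h]
  have e1 : pentaMat a b i (m+4) (Fin.last (m+4)) (Fin.last (m+4)) = a (i + ((m+4:ℕ):ℤ)) := by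
    rw [pentaMat_apply]; simp [pE]
  have e2 : pentaMat a b i (m+4) (Fin.last (m+4)) ⟨m+3, by omega⟩ = 1 := by
    rw [pentaMat_apply]; simp only [pE, Fin.val_last]
    split_ifs <;> first | rfl | omega
  have e3 : (pentaMat a b i (m+4)).submatrix Fin.castSucc Fin.castSucc
      = pentaMat a b i (m+3) := by
    ext p q
    rw [Matrix.submatrix_apply, pentaMat_apply, pentaMat_apply, Fin.coe_castSucc,
      Fin.coe_castSucc]
  have e4 : (pentaMat a b i (m+4)).submatrix Fin.castSucc
      ((⟨m+3, by omega⟩ : Fin (m+5)).succAbove) = colMat a b i (m+4) (m+4) := by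
    ext p q
    rw [Matrix.submatrix_apply, pentaMat_apply, Fin.coe_castSucc, succAbove_coe]
    simp only [colMat, Matrix.of_apply]
    have := q.isLt
    split_ifs <;> first | rfl | (congr 1 <;> omega) | omega
  rw [e1, e2, e3, e4, one_mul]

lemma stepE (a b : ℤ → K) (i : ℤ) (m : ℕ) :
    (colMat a b i (m+4) (m+4)).det =
      b (i + ((m+4:ℕ):ℤ)) * (pentaMat a b i (m+2)).det - (colMat a b i (m+4) (m+3)).det := by
  have h := det_expand_last_two (n := m+2) (colMat a b i (m+4) (m+4)) (by
    intro j hj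
    simp only [colMat, Matrix.of_apply, pE, Fin.val_last]
    split_ifs <;> first | rfl | omega)
  rw [h]
  have e1 : colMat a b i (m+4) (m+4) (Fin.last (m+3)) (Fin.last (m+3))
      = b (i + ((m+4:ℕ):ℤ)) := by
    simp only [colMat, Matrix.of_apply, pE, Fin.val_last]
    split_ifs <;> first | rfl | omega | (congr 1 <;> push_cast <;> ring)
  have e2 : colMat a b i (m+4) (m+4) (Fin.last (m+3)) ⟨m+2, by omega⟩ = 1 := by
    simp only [colMat, Matrix.of_apply, pE, Fin.val_last]
    split_ifs <;> first | rfl | omega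
  have e3 : (colMat a b i (m+4) (m+4)).submatrix Fin.castSucc Fin.castSucc
      = pentaMat a b i (m+2) := by
    ext p q
    rw [Matrix.submatrix_apply, pentaMat_apply]
    simp only [colMat, Matrix.of_apply, Fin.coe_castSucc]
    have := q.isLt
    split_ifs <;> first | rfl | omega
  have e4 : (colMat a b i (m+4) (m+4)).submatrix Fin.castSucc
      ((⟨m+2, by omega⟩ : Fin (m+4)).succAbove) = colMat a b i (m+4) (m+3) := by
    ext p q
    rw [Matrix.submatrix_apply]
    simp only [colMat, Matrix.of_apply, Fin.coe_castSucc, succAbove_coe]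
    have := q.isLt
    split_ifs <;> first | rfl | (congr 1 <;> omega) | omega
  rw [e1, e2, e3, e4, one_mul]

lemma stepF (a b : ℤ → K) (i : ℤ) (m : ℕ) :
    (colMat a b i (m+4) (m+3)).det =
      a (i + ((m+3:ℕ):ℤ)) * (pentaMat a b i (m+1)).det - (colMat a b i (m+4) (m+2)).det := by
  have h := det_expand_last_two (n := m+1) (colMat a b i (m+4) (m+3)) (by
    intro j hj
    simp only [colMat, Matrix.of_apply, pE, Fin.val_last]
    split_ifs <;> first | rfl | omega)
  rw [h]
  have e1 : colMat a b i (m+4) (m+3) (Fin.last (m+2)) (Fin.last (m+2))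
      = a (i + ((m+3:ℕ):ℤ)) := by
    simp only [colMat, Matrix.of_apply, pE, Fin.val_last]
    split_ifs <;> first | rfl | omega | (congr 1 <;> push_cast <;> ring)
  have e2 : colMat a b i (m+4) (m+3) (Fin.last (m+2)) ⟨m+1, by omega⟩ = 1 := by
    simp only [colMat, Matrix.of_apply, pE, Fin.val_last]
    split_ifs <;> first | rfl | omega
  have e3 : (colMat a b i (m+4) (m+3)).submatrix Fin.castSucc Fin.castSucc
      = pentaMat a b i (m+1) := by
    ext p q
    rw [Matrix.submatrix_apply, pentaMat_apply]
    simp only [colMat, Matrix.of_apply, Fin.coe_castSucc]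
    have := q.isLt
    split_ifs <;> first | rfl | omega
  have e4 : (colMat a b i (m+4) (m+3)).submatrix Fin.castSucc
      ((⟨m+1, by omega⟩ : Fin (m+3)).succAbove) = colMat a b i (m+4) (m+2) := by
    ext p q
    rw [Matrix.submatrix_apply]
    simp only [colMat, Matrix.of_apply, Fin.coe_castSucc, succAbove_coe]
    have := q.isLt
    split_ifs <;> first | rfl | (congr 1 <;> omega) | omega
  rw [e1, e2, e3, e4, one_mul]

lemma stepG (a b : ℤ → K) (i : ℤ) (m : ℕ) :
    (colMat a b i (m+4) (m+2)).det =
      (pentaMat a b i m).det - (colMat a b i (m+4) (m+1)).det := by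
  have h := det_expand_last_two (n := m) (colMat a b i (m+4) (m+2)) (by
    intro j hj
    simp only [colMat, Matrix.of_apply, pE, Fin.val_last]
    split_ifs <;> first | rfl | omega)
  rw [h]
  have e1 : colMat a b i (m+4) (m+2) (Fin.last (m+1)) (Fin.last (m+1)) = 1 := by
    simp only [colMat, Matrix.of_apply, pE, Fin.val_last]
    split_ifs <;> first | rfl | omega
  have e2 : colMat a b i (m+4) (m+2) (Fin.last (m+1)) ⟨m, by omega⟩ = 1 := by
    simp only [colMat, Matrix.of_apply, pE, Fin.val_last]
    split_ifs <;> first | rfl | omega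
  have e3 : (colMat a b i (m+4) (m+2)).submatrix Fin.castSucc Fin.castSucc
      = pentaMat a b i m := by
    ext p q
    rw [Matrix.submatrix_apply, pentaMat_apply]
    simp only [colMat, Matrix.of_apply, Fin.coe_castSucc]
    have := q.isLt
    split_ifs <;> first | rfl | omega
  have e4 : (colMat a b i (m+4) (m+2)).submatrix Fin.castSucc
      ((⟨m, by omega⟩ : Fin (m+2)).succAbove) = colMat a b i (m+4) (m+1) := by
    ext p q
    rw [Matrix.submatrix_apply]
    simp only [colMat, Matrix.of_apply, Fin.coe_castSucc, succAbove_coe]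
    have := q.isLt
    split_ifs <;> first | rfl | (congr 1 <;> omega) | omega
  rw [e1, e2, e3, e4, one_mul, one_mul]

lemma stepH (a b : ℤ → K) (i : ℤ) (m : ℕ) :
    (colMat a b i (m+4) (m+1)).det = 0 := by
  apply Matrix.det_eq_zero_of_column_eq_zero (Fin.last m)
  intro r
  simp only [colMat, Matrix.of_apply, pE, Fin.val_last]
  have := r.isLt
  split_ifs <;> first | rfl | omega

lemma penta_step (a b : ℤ → K) (i : ℤ) (m : ℕ) :
    (pentaMat a b i (m+4)).det =
      a (i + ((m+4:ℕ):ℤ)) * (pentaMat a b i (m+3)).det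
      - b (i + ((m+4:ℕ):ℤ)) * (pentaMat a b i (m+2)).det
      + a (i + ((m+3:ℕ):ℤ)) * (pentaMat a b i (m+1)).det
      - (pentaMat a b i m).det := by
  have h1 := step1 a b i m
  have hE := stepE a b i m
  have hF := stepF a b i m
  have hG := stepG a b i m
  have hH := stepH a b i m
  push_cast at h1 hE hF hG hH ⊢
  ring_nf at h1 hE hF hG hH ⊢
  linear_combination h1 - hE + hF - hG + hH


lemma penta_step3 (a b : ℤ → K) (i : ℤ) :
    (pentaMat a b i 3).det =
      a (i+3) * (pentaMat a b i 2).det - b (i+3) * (pentaMat a b i 1).det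
        + a (i+2) * (pentaMat a b i 0).det - 1 := by
  simp [Matrix.det_succ_row_zero, Fin.sum_univ_succ, pentaMat, Fin.succAbove]
  ring

end aux

/-- `D i j` is the pentadiagonal determinant for `j ≥ i`, with the conventions
`D i (i-1) = 1` and `D i j = 0` for `j < i - 1`. -/
noncomputable def friezeDet {K : Type*} [CommRing K] (a b : ℤ → K) (i j : ℤ) : K :=
  if j < i - 1 then 0
  else if j = i - 1 then 1
  else (pentaMat a b i (j - i).toNat).det

/-- Continuant recursion for the symplectic frieze determinants:
`D i j = a j * D i (j-1) - b j * D i (j-2) + a (j-1) * D i (j-3) - D i (j-4)`. -/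
theorem friezeDet_recursion {K : Type*} [CommRing K] (a b : ℤ → K) :
    ∀ i j : ℤ, i ≤ j →
      friezeDet a b i j =
        a j * friezeDet a b i (j - 1) - b j * friezeDet a b i (j - 2) +
          a (j - 1) * friezeDet a b i (j - 3) - friezeDet a b i (j - 4) := by

  intro i j hij
  obtain ⟨k, rfl⟩ : ∃ k : ℕ, j = i + k := ⟨(j - i).toNat, by omega⟩
  have hD : ∀ n : ℕ, friezeDet a b i (i + n) = (pentaMat a b i n).det := by
    intro n
    rw [friezeDet, if_neg (by omega), if_neg (by omega),
      show (i + (n:ℤ) - i).toNat = n from by omega]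
  have hD1 : friezeDet a b i (i - 1) = 1 := by
    rw [friezeDet, if_neg (by omega), if_pos rfl]
  have hD0 : ∀ t : ℤ, t < i - 1 → friezeDet a b i t = 0 := fun t ht => by
    rw [friezeDet, if_pos ht]
  match k with
  | 0 =>
    rw [hD 0, show i + ((0:ℕ):ℤ) - 1 = i - 1 by push_cast; ring, hD1,
      hD0 (i + ((0:ℕ):ℤ) - 2) (by omega), hD0 (i + ((0:ℕ):ℤ) - 3) (by omega),
      hD0 (i + ((0:ℕ):ℤ) - 4) (by omega)]
    simp [Matrix.det_fin_one, pentaMat]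
  | 1 =>
    rw [hD 1, show i + ((1:ℕ):ℤ) - 1 = i + ((0:ℕ):ℤ) by push_cast; ring, hD 0,
      show i + ((1:ℕ):ℤ) - 2 = i - 1 by push_cast; ring, hD1,
      hD0 (i + ((1:ℕ):ℤ) - 3) (by omega), hD0 (i + ((1:ℕ):ℤ) - 4) (by omega)]
    simp [Matrix.det_fin_two, Matrix.det_fin_one, pentaMat]
    push_cast
    ring
  | 2 =>
    rw [hD 2, show i + ((2:ℕ):ℤ) - 1 = i + ((1:ℕ):ℤ) by push_cast; ring, hD 1,
      show i + ((2:ℕ):ℤ) - 2 = i + ((0:ℕ):ℤ) by push_cast; ring, hD 0,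
      show i + ((2:ℕ):ℤ) - 3 = i - 1 by push_cast; ring, hD1,
      hD0 (i + ((2:ℕ):ℤ) - 4) (by omega)]
    simp [Matrix.det_fin_three, Matrix.det_fin_two, Matrix.det_fin_one, pentaMat]
    push_cast
    ring
  | 3 =>
    rw [hD 3, show i + ((3:ℕ):ℤ) - 1 = i + ((2:ℕ):ℤ) by push_cast; ring, hD 2,
      show i + ((3:ℕ):ℤ) - 2 = i + ((1:ℕ):ℤ) by push_cast; ring, hD 1,
      show i + ((3:ℕ):ℤ) - 3 = i + ((0:ℕ):ℤ) by push_cast; ring, hD 0,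
      show i + ((3:ℕ):ℤ) - 4 = i - 1 by push_cast; ring, hD1]
    have h := penta_step3 a b i
    push_cast at h ⊢
    ring_nf at h ⊢
    linear_combination h
  | (m+4) =>
    rw [hD (m+4), show i + ((m+4:ℕ):ℤ) - 1 = i + ((m+3:ℕ):ℤ) by push_cast; ring, hD (m+3),
      show i + ((m+4:ℕ):ℤ) - 2 = i + ((m+2:ℕ):ℤ) by push_cast; ring, hD (m+2),
      show i + ((m+4:ℕ):ℤ) - 3 = i + ((m+1:ℕ):ℤ) by push_cast; ring, hD (m+1),
      show i + ((m+4:ℕ):ℤ) - 4 = i + ((m:ℕ):ℤ) by push_cast; ring, hD m]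
    have h := penta_step a b i m
    push_cast at h ⊢
    ring_nf at h ⊢
    linear_combination h
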